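/- Let J1, I22, I33, I23 be real numbers with J1 > 0, I22 > 0 and I23 ≠ 0. If (ω1, ω2) : ℝ → ℝ² is a differentiable solution of the system J1 ω1' = −I23 ω2² + (I22 − I33) ω2 + I23, I22 ω2' = ω1 (I23 ω2 + I33 − J1) with ω2(0) = (J1 − I33)/I23, then ω2(τ) = (J1 − I33)/I23 for all τ. Consequently the horizontal line ω2 = (J1 − I33)/I23 and each of the two open half-planes ω2 > (J1 − I33)/I23 and ω2 < (J1 − I33)/I23 are invariant under the flow. -/

import Mathlib

/-- The horizontal line `ω2 = (J1 − I33)/I23` and the two open half-planes it bounds are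
invariant under the flow of the reduced inhomogeneous Suslov problem. -/
theorem suslov_invariant_line_and_halfplanes
    (J1 I22 I33 I23 : ℝ)
    (hJ1 : 0 < J1) (hI22 : 0 < I22) (hI23 : I23 ≠ 0)
    (ω1 ω2 : ℝ → ℝ)
    (hω1 : ∀ τ : ℝ, HasDerivAt ω1
      ((-I23 * (ω2 τ) ^ 2 + (I22 - I33) * ω2 τ + I23) / J1) τ)
    (hω2 : ∀ τ : ℝ, HasDerivAt ω2
      (ω1 τ * (I23 * ω2 τ + I33 - J1) / I22) τ) :
    (ω2 0 = (J1 - I33) / I23 → ∀ τ : ℝ, ω2 τ = (J1 - I33) / I23) ∧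
    (ω2 0 > (J1 - I33) / I23 → ∀ τ : ℝ, ω2 τ > (J1 - I33) / I23) ∧
    (ω2 0 < (J1 - I33) / I23 → ∀ τ : ℝ, ω2 τ < (J1 - I33) / I23) := by
  set c : ℝ := (J1 - I33) / I23 with hc
  have hcI : I23 * c = J1 - I33 := by rw [hc]; field_simp
  set g : ℝ → ℝ := fun τ => ω1 τ * I23 / I22 with hg
  have hω1c : Continuous ω1 := by
    have : Differentiable ℝ ω1 := fun τ => (hω1 τ).differentiableAt
    exact this.continuous
  have hgc : Continuous g := by
    exact (hω1c.mul continuous_const).div_const I22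
  set G : ℝ → ℝ := fun τ => ∫ t in (0:ℝ)..τ, g t with hG
  have hGd : ∀ τ, HasDerivAt G (g τ) τ := fun τ =>
    (hgc.integral_hasStrictDerivAt 0 τ).hasDerivAt
  have hF : ∀ τ, HasDerivAt (fun τ => (ω2 τ - c) * Real.exp (-G τ)) 0 τ := by
    intro τ
    have h1 : HasDerivAt (fun τ => ω2 τ - c) (g τ * (ω2 τ - c)) τ := by
      have := (hω2 τ).sub_const c
      refine this.congr_deriv ?_
      have hI22' : I22 ≠ 0 := ne_of_gt hI22
      simp only [hg, hc]
      field_simp [hg, hc]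
      ring
    have h2 : HasDerivAt (fun τ => Real.exp (-G τ)) (Real.exp (-G τ) * (-(g τ))) τ :=
      ((hGd τ).neg).exp
    have := h1.mul h2
    refine this.congr_deriv ?_
    ring
  have key : ∀ τ, (ω2 τ - c) * Real.exp (-G τ) = ω2 0 - c := by
    intro τ
    have hconst := is_const_of_deriv_eq_zero
      (f := fun τ => (ω2 τ - c) * Real.exp (-G τ))
      (fun τ => (hF τ).differentiableAt) (fun τ => (hF τ).deriv) τ 0
    have hG0 : G 0 = 0 := intervalIntegral.integral_same
    simpa [hG0] using hconst
  have main : ∀ τ, ω2 τ - c = (ω2 0 - c) * Real.exp (G τ) := by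
    intro τ
    rw [← key τ, Real.exp_neg, mul_assoc,
      inv_mul_cancel₀ (Real.exp_pos (G τ)).ne', mul_one]
  refine ⟨?_, ?_, ?_⟩
  · intro h0 τ
    have := main τ
    rw [show ω2 0 - c = 0 by rw [h0]; ring] at this
    linarith [this]
  · intro h0 τ
    have := main τ
    have : ω2 τ - c > 0 := by
      rw [this]; exact mul_pos (by linarith) (Real.exp_pos _)
    linarith
  · intro h0 τ
    have := main τ
    have : ω2 τ - c < 0 := by
      rw [this]
      exact mul_neg_of_neg_of_pos (by linarith) (Real.exp_pos _)
    linarith
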